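/- Well-posedness with interface unknowns and fine-flux/coarse-pressure matching: augment the one-dimensional composite finite volume scheme with additional interface unknowns p_{I+1/2}^{n,k} and p_{I+1/2}^{n}, interface fluxes u_{I+1/2}^{n,k} = (p_{I+1/2}^{n,k} − p_I^{n,k})/(x_{I+1/2} − x_I) and u_{I+1/2}^{n} = (p_{I+1}^{n} − p_{I+1/2}^{n})/(x_{I+1} − x_{I+1/2}), and interface conditions, for every n: u_{I+1/2}^{n,k} = u_{I+1/2}^{n} for all k and δt₂ p_{I+1/2}^{n} = Σ_{k=1}^{𝒦} δt₁ p_{I+1/2}^{n,k}. Then for every choice of sources f_j^{n,k}, f_j^{n} and initial values p_j^0, the resulting finite linear system has exactly one solution (p_j^{n,k} for j ≤ I, p_j^{n} for j > I, p_{I+1/2}^{n,k}, p_{I+1/2}^{n}). -/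

import Mathlib

set_option linter.unreachableTactic false
set_option linter.unusedTactic false
set_option maxHeartbeats 1000000


open Finset

/-- Cell center `x_j = (x_{j-1/2} + x_{j+1/2})/2`, where `xh j` denotes `x_{j+1/2}`
(so `xh 0 = x_{1/2}`, …, `xh J = x_{J+1/2}`). -/
noncomputable def xc (xh : ℕ → ℝ) (j : ℕ) : ℝ := (xh (j - 1) + xh j) / 2

/-- Cell width `h_j = x_{j+1/2} − x_{j−1/2}`. -/
noncomputable def hw (xh : ℕ → ℝ) (j : ℕ) : ℝ := xh j - xh (j - 1)

/-- The previous fine-time value `p_j^{n,k−1}`, with the conventions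
`p_j^{n,0} = p_j^{n−1,𝒦}` and `p_j^{1,0} = p_j^0`. -/
def prevF (K : ℕ) (p0 : ℕ → ℝ) (p1 : ℕ → ℕ → ℕ → ℝ) (n k j : ℕ) : ℝ :=
  if k = 1 then (if n = 1 then p0 j else p1 (n - 1) K j) else p1 n (k - 1) j

/-- The previous coarse-time value `p_j^{n−1}`, with the convention `p_j^0 = p_j^0`. -/
def prevC (p0 : ℕ → ℝ) (p2 : ℕ → ℕ → ℝ) (n j : ℕ) : ℝ :=
  if n = 1 then p0 j else p2 (n - 1) j

/-- Fine fluxes `u_{j+1/2}^{n,k}` for face indices `j = 0,…,I`: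
`u_{1/2}^{n,k} = p_1^{n,k}/(x_1 − x_{1/2})`,
`u_{j+1/2}^{n,k} = (p_{j+1}^{n,k} − p_j^{n,k})/(x_{j+1} − x_j)` for `1 ≤ j < I`, and the
interface flux `u_{I+1/2}^{n,k} = (p_{I+1/2}^{n,k} − p_I^{n,k})/(x_{I+1/2} − x_I)`,
where `q1 n k` denotes the interface unknown `p_{I+1/2}^{n,k}`. -/
noncomputable def uF (I : ℕ) (xh : ℕ → ℝ) (p1 : ℕ → ℕ → ℕ → ℝ) (q1 : ℕ → ℕ → ℝ)
    (n k j : ℕ) : ℝ :=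
  if j = 0 then p1 n k 1 / (xc xh 1 - xh 0)
  else if j < I then (p1 n k (j + 1) - p1 n k j) / (xc xh (j + 1) - xc xh j)
  else (q1 n k - p1 n k I) / (xh I - xc xh I)

/-- Coarse fluxes `u_{j+1/2}^{n}` for face indices `j = I,…,J`:
the interface flux `u_{I+1/2}^{n} = (p_{I+1}^{n} − p_{I+1/2}^{n})/(x_{I+1} − x_{I+1/2})`
(where `q2 n` denotes the interface unknown `p_{I+1/2}^{n}`),
`u_{j+1/2}^{n} = (p_{j+1}^{n} − p_j^{n})/(x_{j+1} − x_j)` for `I < j < J`, and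
`u_{J+1/2}^{n} = −p_J^{n}/(x_{J+1/2} − x_J)`. -/
noncomputable def uC (I J : ℕ) (xh : ℕ → ℝ) (p2 : ℕ → ℕ → ℝ) (q2 : ℕ → ℝ)
    (n j : ℕ) : ℝ :=
  if j = J then -(p2 n J) / (xh J - xc xh J)
  else if I < j then (p2 n (j + 1) - p2 n j) / (xc xh (j + 1) - xc xh j)
  else (p2 n (I + 1) - q2 n) / (xc xh (I + 1) - xh I)

/-- The interior scheme equations of the one-dimensional composite finite volume scheme:
`(h_j/δt₁)(p_j^{n,k} − p_j^{n,k−1}) − (u_{j+1/2}^{n,k} − u_{j−1/2}^{n,k}) = h_j f_j^{n,k}`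
for `j = 1,…,I`, `n = 1,…,N₂`, `k = 1,…,𝒦`, and
`(h_j/δt₂)(p_j^{n} − p_j^{n−1}) − (u_{j+1/2}^{n} − u_{j−1/2}^{n}) = h_j f_j^{n}`
for `j = I+1,…,J`, `n = 1,…,N₂`. -/
def SchemeEqs (J I K N2 : ℕ) (δt1 δt2 : ℝ) (xh : ℕ → ℝ)
    (p0 : ℕ → ℝ) (f1 : ℕ → ℕ → ℕ → ℝ) (f2 : ℕ → ℕ → ℝ)
    (p1 : ℕ → ℕ → ℕ → ℝ) (p2 : ℕ → ℕ → ℝ) (q1 : ℕ → ℕ → ℝ) (q2 : ℕ → ℝ) : Prop :=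
  (∀ n ∈ Icc 1 N2, ∀ k ∈ Icc 1 K, ∀ j ∈ Icc 1 I,
      (hw xh j / δt1) * (p1 n k j - prevF K p0 p1 n k j)
        - (uF I xh p1 q1 n k j - uF I xh p1 q1 n k (j - 1)) = hw xh j * f1 n k j)
  ∧ (∀ n ∈ Icc 1 N2, ∀ j ∈ Icc (I + 1) J,
      (hw xh j / δt2) * (p2 n j - prevC p0 p2 n j)
        - (uC I J xh p2 q2 n j - uC I J xh p2 q2 n (j - 1)) = hw xh j * f2 n j)

/-- Interface conditions with interface unknowns and fine-flux/coarse-pressure matching: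
`u_{I+1/2}^{n,k} = u_{I+1/2}^{n}` for all `k` and
`δt₂ p_{I+1/2}^{n} = ∑_{k=1}^{𝒦} δt₁ p_{I+1/2}^{n,k}`. -/
def InterfaceFineFlux (J I K N2 : ℕ) (δt1 δt2 : ℝ) (xh : ℕ → ℝ)
    (p1 : ℕ → ℕ → ℕ → ℝ) (p2 : ℕ → ℕ → ℝ) (q1 : ℕ → ℕ → ℝ) (q2 : ℕ → ℝ) : Prop :=
  ∀ n ∈ Icc 1 N2,
    (∀ k ∈ Icc 1 K, uF I xh p1 q1 n k I = uC I J xh p2 q2 n I)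
    ∧ δt2 * q2 n = ∑ k ∈ Icc 1 K, δt1 * q1 n k

set_option linter.unusedSectionVars false

namespace CompositeAux

/-- time-telescoping energy positivity -/
lemma time_energy (K : ℕ) (a : ℕ → ℝ) (h0 : a 0 = 0) :
    0 ≤ ∑ i ∈ Finset.range K, a (i + 1) * (a (i + 1) - a i) := by
  have h1 : ∑ i ∈ Finset.range K, (a (i+1)^2 - a i ^2) = a K ^2 - a 0 ^2 :=
    Finset.sum_range_sub (fun i => a i ^ 2) K
  have h2 : ∑ i ∈ Finset.range K, a (i + 1) * (a (i + 1) - a i)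
      = ((a K ^2 - a 0 ^2) + ∑ i ∈ Finset.range K, (a (i+1) - a i)^2) / 2 := by
    rw [← h1, ← Finset.sum_add_distrib, Finset.sum_div]
    refine Finset.sum_congr rfl fun i _ => by ring
  rw [h2, h0]
  have hs : 0 ≤ ∑ i ∈ Finset.range K, (a (i+1) - a i)^2 := Finset.sum_nonneg fun i _ => sq_nonneg _
  nlinarith [sq_nonneg (a K)]

end CompositeAux

section Main

variable (J I K : ℕ) (xh : ℕ → ℝ)

/-- fine face distances, `m = 0, …, I`. -/
noncomputable def Dd (m : ℕ) : ℝ :=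
  if m = 0 then xc xh 1 - xh 0
  else if m < I then xc xh (m + 1) - xc xh m
  else xh I - xc xh I

/-- coarse face distances (shifted index), `m = 0, …, J - I`; face `I + m`. -/
noncomputable def Ee (m : ℕ) : ℝ :=
  if I + m = J then xh J - xc xh J
  else if 0 < m then xc xh (I + m + 1) - xc xh (I + m)
  else xc xh (I + 1) - xh I

variable (hxmono : ∀ j < J, xh j < xh (j + 1)) (hI1 : 1 ≤ I) (hIJ : I < J)

include hxmono in
lemma hw_pos {j : ℕ} (h1 : 1 ≤ j) (h2 : j ≤ J) : 0 < hw xh j := by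
  have := hxmono (j - 1) (by omega)
  have hj : j - 1 + 1 = j := by omega
  rw [hj] at this
  simp only [hw]; linarith

include hxmono hI1 hIJ in
lemma Dd_pos {m : ℕ} (h2 : m ≤ I) : 0 < Dd I xh m := by
  unfold Dd
  split_ifs with h0 hlt
  · have := hxmono 0 (by omega)
    simp only [xc]; norm_num; linarith
  · have ha := hxmono (m - 1) (by omega)
    have hb := hxmono m (by omega)
    have hm : m - 1 + 1 = m := by omega
    rw [hm] at ha
    simp only [xc]
    have : m + 1 - 1 = m := by omega
    rw [this]
    linarith
  · have := hxmono (I - 1) (by omega)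
    have hm : I - 1 + 1 = I := by omega
    rw [hm] at this
    simp only [xc]
    have : I - 1 = I - 1 := rfl
    linarith

include hxmono hIJ in
lemma Ee_pos {m : ℕ} (h2 : m ≤ J - I) : 0 < Ee J I xh m := by
  unfold Ee
  split_ifs with h0 hlt
  · have := hxmono (J - 1) (by omega)
    have hm : J - 1 + 1 = J := by omega
    rw [hm] at this
    simp only [xc]; linarith
  · have ha := hxmono (I + m - 1) (by omega)
    have hb := hxmono (I + m) (by omega)
    have hm : I + m - 1 + 1 = I + m := by omega
    rw [hm] at ha
    simp only [xc]
    have : I + m + 1 - 1 = I + m := by omega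
    rw [this]
    linarith
  · have := hxmono I (by omega)
    simp only [xc]
    have : I + 1 - 1 = I := by omega
    rw [this]
    linarith

end Main

section Alg

variable (J I K : ℕ) (xh : ℕ → ℝ)

abbrev Ix : Type := (Fin K × Fin I) ⊕ (Fin (J - I) ⊕ (Fin K ⊕ Unit))

variable {J I K} in
def dP1 (x : Ix J I K → ℝ) (k j : ℕ) : ℝ :=
  if h : 1 ≤ k ∧ k ≤ K ∧ 1 ≤ j ∧ j ≤ I then
    x (Sum.inl (⟨k - 1, by omega⟩, ⟨j - 1, by omega⟩)) else 0

variable {J I K} in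
def dP2 (x : Ix J I K → ℝ) (j : ℕ) : ℝ :=
  if h : I + 1 ≤ j ∧ j ≤ J then x (Sum.inr (Sum.inl ⟨j - (I + 1), by omega⟩)) else 0

variable {J I K} in
def dQ1 (x : Ix J I K → ℝ) (k : ℕ) : ℝ :=
  if h : 1 ≤ k ∧ k ≤ K then x (Sum.inr (Sum.inr (Sum.inl ⟨k - 1, by omega⟩))) else 0

variable {J I K} in
def dQ2 (x : Ix J I K → ℝ) : ℝ := x (Sum.inr (Sum.inr (Sum.inr ())))

noncomputable def WF (x : Ix J I K → ℝ) (k j : ℕ) : ℝ :=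
  uF I xh (fun _ => dP1 x) (fun _ => dQ1 x) 0 k j

noncomputable def VC (x : Ix J I K → ℝ) (j : ℕ) : ℝ :=
  uC I J xh (fun _ => dP2 x) (fun _ => dQ2 x) 0 j

variable (δt1 δt2 : ℝ)

noncomputable def Lfun (x : Ix J I K → ℝ) : Ix J I K → ℝ
  | .inl (k, j) =>
      (hw xh ((j : ℕ) + 1) / δt1) * (dP1 x ((k : ℕ) + 1) ((j : ℕ) + 1) - dP1 x k ((j : ℕ) + 1))
        - (WF J I K xh x ((k : ℕ) + 1) ((j : ℕ) + 1) - WF J I K xh x ((k : ℕ) + 1) j)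
  | .inr (.inl j) =>
      (hw xh (I + 1 + (j : ℕ)) / δt2) * dP2 x (I + 1 + (j : ℕ))
        - (VC J I K xh x (I + 1 + (j : ℕ)) - VC J I K xh x (I + (j : ℕ)))
  | .inr (.inr (.inl k)) => WF J I K xh x ((k : ℕ) + 1) I - VC J I K xh x I
  | .inr (.inr (.inr _)) => δt2 * dQ2 x - ∑ k ∈ Finset.Icc 1 K, δt1 * dQ1 x k

variable {J I K xh δt1 δt2}

lemma dP1_add (x y : Ix J I K → ℝ) (k j : ℕ) :
    dP1 (x + y) k j = dP1 x k j + dP1 y k j := by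
  unfold dP1; split_ifs <;> simp

lemma dP1_smul (c : ℝ) (x : Ix J I K → ℝ) (k j : ℕ) :
    dP1 (c • x) k j = c * dP1 x k j := by
  unfold dP1; split_ifs <;> simp

lemma dP2_add (x y : Ix J I K → ℝ) (j : ℕ) :
    dP2 (x + y) j = dP2 x j + dP2 y j := by
  unfold dP2; split_ifs <;> simp

lemma dP2_smul (c : ℝ) (x : Ix J I K → ℝ) (j : ℕ) :
    dP2 (c • x) j = c * dP2 x j := by
  unfold dP2; split_ifs <;> simp

lemma dQ1_add (x y : Ix J I K → ℝ) (k : ℕ) :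
    dQ1 (x + y) k = dQ1 x k + dQ1 y k := by
  unfold dQ1; split_ifs <;> simp

lemma dQ1_smul (c : ℝ) (x : Ix J I K → ℝ) (k : ℕ) :
    dQ1 (c • x) k = c * dQ1 x k := by
  unfold dQ1; split_ifs <;> simp

lemma dQ2_add (x y : Ix J I K → ℝ) : dQ2 (x + y) = dQ2 x + dQ2 y := rfl

lemma dQ2_smul (c : ℝ) (x : Ix J I K → ℝ) : dQ2 (c • x) = c * dQ2 x := rfl

lemma WF_add (x y : Ix J I K → ℝ) (k j : ℕ) :
    WF J I K xh (x + y) k j = WF J I K xh x k j + WF J I K xh y k j := by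
  unfold WF uF
  split_ifs <;> simp only [dP1_add, dQ1_add] <;> ring

lemma WF_smul (c : ℝ) (x : Ix J I K → ℝ) (k j : ℕ) :
    WF J I K xh (c • x) k j = c * WF J I K xh x k j := by
  unfold WF uF
  split_ifs <;> simp only [dP1_smul, dQ1_smul] <;> ring

lemma VC_add (x y : Ix J I K → ℝ) (j : ℕ) :
    VC J I K xh (x + y) j = VC J I K xh x j + VC J I K xh y j := by
  unfold VC uC
  split_ifs <;> simp only [dP2_add, dQ2_add] <;> ring

lemma VC_smul (c : ℝ) (x : Ix J I K → ℝ) (j : ℕ) :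
    VC J I K xh (c • x) j = c * VC J I K xh x j := by
  unfold VC uC
  split_ifs <;> simp only [dP2_smul, dQ2_smul] <;> ring

variable (J I K xh δt1 δt2) in
noncomputable def Lmap : (Ix J I K → ℝ) →ₗ[ℝ] (Ix J I K → ℝ) where
  toFun := Lfun J I K xh δt1 δt2
  map_add' x y := by
    funext i
    rcases i with ⟨k, j⟩ | j | k | u
    · simp only [Lfun, Pi.add_apply, dP1_add, WF_add]; ring
    · simp only [Lfun, Pi.add_apply, dP2_add, VC_add]; ring
    · simp only [Lfun, Pi.add_apply, WF_add, VC_add]; ring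
    · simp only [Lfun, Pi.add_apply, dQ1_add, dQ2_add, mul_add, Finset.sum_add_distrib]
      ring
  map_smul' c x := by
    funext i
    rcases i with ⟨k, j⟩ | j | k | u
    · simp only [Lfun, Pi.smul_apply, smul_eq_mul, RingHom.id_apply, dP1_smul, WF_smul]; ring
    · simp only [Lfun, Pi.smul_apply, smul_eq_mul, RingHom.id_apply, dP2_smul, VC_smul]; ring
    · simp only [Lfun, Pi.smul_apply, smul_eq_mul, RingHom.id_apply, WF_smul, VC_smul]; ring
    · simp only [Lfun, Pi.smul_apply, smul_eq_mul, RingHom.id_apply, dQ1_smul, dQ2_smul,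
        Finset.mul_sum]
      rw [mul_sub, Finset.mul_sum]
      rw [Finset.sum_congr rfl fun k _ => (by ring : δt1 * (c * dQ1 x k) = c * (δt1 * dQ1 x k))]
      ring

section Branch

variable (hI1 : 1 ≤ I) (hIJ : I < J)

lemma WF_zero (x : Ix J I K → ℝ) (k : ℕ) :
    WF J I K xh x k 0 = dP1 x k 1 / (xc xh 1 - xh 0) := by
  simp [WF, uF]

lemma WF_mid (x : Ix J I K → ℝ) (k m : ℕ) (h0 : m ≠ 0) (hm : m < I) :
    WF J I K xh x k m = (dP1 x k (m + 1) - dP1 x k m) / (xc xh (m + 1) - xc xh m) := by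
  simp [WF, uF, h0, hm]

include hI1 in
lemma WF_I (x : Ix J I K → ℝ) (k : ℕ) :
    WF J I K xh x k I = (dQ1 x k - dP1 x k I) / (xh I - xc xh I) := by
  have h0 : I ≠ 0 := by omega
  simp [WF, uF, h0]

include hIJ in
lemma VC_I (x : Ix J I K → ℝ) :
    VC J I K xh x I = (dP2 x (I + 1) - dQ2 x) / (xc xh (I + 1) - xh I) := by
  have h0 : I ≠ J := by omega
  simp [VC, uC, h0]

lemma VC_mid (x : Ix J I K → ℝ) (j : ℕ) (hj : I < j) (hJ : j ≠ J) :
    VC J I K xh x j = (dP2 x (j + 1) - dP2 x j) / (xc xh (j + 1) - xc xh j) := by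
  simp [VC, uC, hj, hJ]

lemma VC_J (x : Ix J I K → ℝ) :
    VC J I K xh x J = -(dP2 x J) / (xh J - xc xh J) := by
  simp [VC, uC]

lemma dP1_out (x : Ix J I K → ℝ) {k j : ℕ} (h : ¬(1 ≤ k ∧ k ≤ K ∧ 1 ≤ j ∧ j ≤ I)) :
    dP1 x k j = 0 := dif_neg h

lemma dP2_out (x : Ix J I K → ℝ) {j : ℕ} (h : ¬(I + 1 ≤ j ∧ j ≤ J)) :
    dP2 x j = 0 := dif_neg h

lemma dQ1_out (x : Ix J I K → ℝ) {k : ℕ} (h : ¬(1 ≤ k ∧ k ≤ K)) :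
    dQ1 x k = 0 := dif_neg h

section Rel

variable (hxmono : ∀ j < J, xh j < xh (j + 1)) (hI1 : 1 ≤ I) (hIJ : I < J)

include hxmono hI1 hIJ

lemma Rel1 (x : Ix J I K → ℝ) (k m : ℕ) (hm : m < I) :
    dP1 x k (m + 1) - dP1 x k m = Dd I xh m * WF J I K xh x k m := by
  have hd := Dd_pos J I xh hxmono hI1 hIJ (le_of_lt hm)
  rcases Nat.eq_zero_or_pos m with h0 | h0
  · subst h0
    rw [WF_zero, show dP1 x k 0 = 0 from dP1_out x (by omega)]
    have hD : Dd I xh 0 = xc xh 1 - xh 0 := if_pos rfl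
    rw [hD] at hd ⊢
    field_simp
    ring
  · rw [WF_mid x k m (by omega) hm]
    rw [show Dd I xh m = xc xh (m + 1) - xc xh m by unfold Dd; rw [if_neg (by omega), if_pos hm]]
    have : Dd I xh m = xc xh (m + 1) - xc xh m := by
      unfold Dd; rw [if_neg (by omega), if_pos hm]
    rw [this] at hd
    field_simp

lemma Rel2 (x : Ix J I K → ℝ) (k : ℕ) :
    dQ1 x k - dP1 x k I = Dd I xh I * WF J I K xh x k I := by
  have hd := Dd_pos J I xh hxmono hI1 hIJ (le_refl I)
  rw [WF_I hI1]
  have hD : Dd I xh I = xh I - xc xh I := by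
    unfold Dd; rw [if_neg (by omega), if_neg (by omega)]
  rw [hD] at hd ⊢
  field_simp

lemma Rel3 (x : Ix J I K → ℝ) (m : ℕ) (h1 : 1 ≤ m) (hm : m ≤ J - I) :
    dP2 x (I + m + 1) - dP2 x (I + m) = Ee J I xh m * VC J I K xh x (I + m) := by
  have hd := Ee_pos J I xh hxmono hIJ hm
  rcases eq_or_lt_of_le hm with hMe | hMl
  · have hJ : I + m = J := by omega
    rw [hJ, VC_J, dP2_out x (by omega)]
    have hE : Ee J I xh m = xh J - xc xh J := by unfold Ee; rw [if_pos hJ]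
    rw [hE] at hd ⊢
    field_simp
    ring
  · have hJ : I + m ≠ J := by omega
    rw [VC_mid x (I + m) (by omega) hJ]
    have hE : Ee J I xh m = xc xh (I + m + 1) - xc xh (I + m) := by
      unfold Ee; rw [if_neg hJ, if_pos (by omega)]
    rw [hE] at hd ⊢
    field_simp

lemma Rel4 (x : Ix J I K → ℝ) :
    dP2 x (I + 1) - dQ2 x = Ee J I xh 0 * VC J I K xh x I := by
  have hd := Ee_pos J I xh hxmono hIJ (Nat.zero_le _)
  rw [VC_I hIJ]
  have hE : Ee J I xh 0 = xc xh (I + 1) - xh I := by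
    unfold Ee; rw [if_neg (by omega), if_neg (by omega)]
  rw [hE] at hd ⊢
  field_simp

end Rel

end Branch

lemma dP1_coord (x : Ix J I K → ℝ) (k : Fin K) (j : Fin I) :
    dP1 x ((k : ℕ) + 1) ((j : ℕ) + 1) = x (Sum.inl (k, j)) := by
  rw [dP1, dif_pos ⟨by omega, k.isLt, by omega, j.isLt⟩]
  congr 1 <;> (try simp [Prod.ext_iff, Fin.ext_iff]) <;> (try omega)

lemma dP2_coord (x : Ix J I K → ℝ) (m : Fin (J - I)) :
    dP2 x (I + (m : ℕ) + 1) = x (Sum.inr (Sum.inl m)) := by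
  rw [dP2, dif_pos ⟨by omega, by have := m.isLt; omega⟩]
  congr 1 <;> (try simp [Fin.ext_iff]) <;> (try omega)

lemma dQ1_coord (x : Ix J I K → ℝ) (k : Fin K) :
    dQ1 x ((k : ℕ) + 1) = x (Sum.inr (Sum.inr (Sum.inl k))) := by
  rw [dQ1, dif_pos ⟨by omega, k.isLt⟩]
  congr 1 <;> (try simp [Fin.ext_iff]) <;> (try omega)

lemma ker_zero (hxmono : ∀ j < J, xh j < xh (j + 1)) (hI1 : 1 ≤ I) (hIJ : I < J)
    (hK : 1 ≤ K) (hδt1 : 0 < δt1) (hδt2 : δt2 = (K : ℝ) * δt1)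
    (x : Ix J I K → ℝ) (hx : Lfun J I K xh δt1 δt2 x = 0) : x = 0 := by
  have hδt2pos : 0 < δt2 := by
    rw [hδt2]
    have : (0 : ℝ) < (K : ℝ) := by exact_mod_cast hK
    positivity
  set P : ℕ → ℕ → ℝ := dP1 x with hPdef
  set R : ℕ → ℝ := dP2 x with hRdef
  set Q : ℕ → ℝ := dQ1 x with hQdef
  set W : ℕ → ℕ → ℝ := WF J I K xh x with hWdef
  set V : ℕ → ℝ := VC J I K xh x with hVdef
  set M := J - I with hMdef
  have hM1 : 1 ≤ M := by omega
  -- component equations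
  have F1 : ∀ k, k < K → ∀ j, j < I →
      (hw xh (j + 1) / δt1) * (P (k + 1) (j + 1) - P k (j + 1))
        - (W (k + 1) (j + 1) - W (k + 1) j) = 0 := by
    intro k hk j hj
    exact congrFun hx (Sum.inl (⟨k, hk⟩, ⟨j, hj⟩))
  have F2 : ∀ m, m < M →
      (hw xh (I + m + 1) / δt2) * R (I + m + 1) - (V (I + m + 1) - V (I + m)) = 0 := by
    intro m hm
    have h := congrFun hx (Sum.inr (Sum.inl ⟨m, hm⟩))
    have e : I + 1 + m = I + m + 1 := by omega
    simpa [Lfun, e] using h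
  have F3 : ∀ k, k < K → W (k + 1) I = V I := by
    intro k hk
    have h := congrFun hx (Sum.inr (Sum.inr (Sum.inl ⟨k, hk⟩)))
    have : W (k + 1) I - V I = 0 := h
    linarith
  have F4 : δt2 * dQ2 x = ∑ k ∈ Finset.Icc 1 K, δt1 * Q k := by
    have h := congrFun hx (Sum.inr (Sum.inr (Sum.inr ())))
    have : δt2 * dQ2 x - ∑ k ∈ Finset.Icc 1 K, δt1 * Q k = 0 := h
    linarith
  -- difference relations
  have rel1 : ∀ k m, m < I → P k (m + 1) - P k m = Dd I xh m * W k m :=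
    fun k m hm => Rel1 hI1 hIJ hxmono x k m hm
  have rel2 : ∀ k, Q k - P k I = Dd I xh I * W k I :=
    fun k => Rel2 hI1 hIJ hxmono x k
  have rel3 : ∀ m, 1 ≤ m → m ≤ M → R (I + m + 1) - R (I + m) = Ee J I xh m * V (I + m) :=
    fun m h1 hm => Rel3 hI1 hIJ hxmono x m h1 hm
  have rel4 : R (I + 1) - dQ2 x = Ee J I xh 0 * V I := Rel4 hI1 hIJ hxmono x
  -- fine summation by parts
  have stepA : ∀ k, ∑ j ∈ Finset.range I, (W k (j + 1) - W k j) * P k (j + 1)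
      = W k I * Q k - ∑ m ∈ Finset.range (I + 1), Dd I xh m * (W k m) ^ 2 := by
    intro k
    have tele : ∑ j ∈ Finset.range I, (W k (j + 1) * P k (j + 1) - W k j * P k j)
        = W k I * P k I - W k 0 * P k 0 :=
      Finset.sum_range_sub (fun j => W k j * P k j) I
    have hpt : ∀ j ∈ Finset.range I, (W k (j + 1) - W k j) * P k (j + 1)
        = (W k (j + 1) * P k (j + 1) - W k j * P k j) - Dd I xh j * (W k j) ^ 2 := by
      intro j hj
      have h := rel1 k j (Finset.mem_range.mp hj)
      have hp : P k (j + 1) = P k j + Dd I xh j * W k j := by linarith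
      rw [hp]; ring
    rw [Finset.sum_congr rfl hpt, Finset.sum_sub_distrib, tele]
    have hP0 : P k 0 = 0 := dP1_out x (by omega)
    have hPI : P k I = Q k - Dd I xh I * W k I := by have := rel2 k; linarith
    rw [Finset.sum_range_succ, hP0, hPI]
    ring
  -- coarse summation by parts
  have stepB : ∑ m ∈ Finset.range M, (V (I + m + 1) - V (I + m)) * R (I + m + 1)
      = -(V I * dQ2 x) - ∑ m ∈ Finset.range (M + 1), Ee J I xh m * (V (I + m)) ^ 2 := by
    have tele : ∑ m ∈ Finset.range M,
        (V (I + m + 1) * R (I + m + 1 + 1) - V (I + m) * R (I + m + 1))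
        = V (I + M) * R (I + M + 1) - V (I + 0) * R (I + 0 + 1) :=
      Finset.sum_range_sub (fun m => V (I + m) * R (I + m + 1)) M
    have hpt : ∀ m ∈ Finset.range M, (V (I + m + 1) - V (I + m)) * R (I + m + 1)
        = (V (I + m + 1) * R (I + m + 1 + 1) - V (I + m) * R (I + m + 1))
          - Ee J I xh (m + 1) * (V (I + m + 1)) ^ 2 := by
      intro m hm
      have hmM := Finset.mem_range.mp hm
      have h' : R (I + m + 1 + 1) - R (I + m + 1) = Ee J I xh (m + 1) * V (I + m + 1) :=
        rel3 (m + 1) (by omega) (by omega)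
      have hr : R (I + m + 1 + 1) = R (I + m + 1) + Ee J I xh (m + 1) * V (I + m + 1) := by
        linarith
      rw [hr]; ring
    rw [Finset.sum_congr rfl hpt, Finset.sum_sub_distrib, tele]
    have hRJ : R (I + M + 1) = 0 := dP2_out x (by omega)
    have hRI : R (I + 0 + 1) = dQ2 x + Ee J I xh 0 * V I := by
      have h0 : R (I + 0 + 1) = R (I + 1) := rfl
      rw [h0]; linarith [rel4]
    have hsucc : ∑ m ∈ Finset.range (M + 1), Ee J I xh m * (V (I + m)) ^ 2
        = (∑ m ∈ Finset.range M, Ee J I xh (m + 1) * (V (I + m + 1)) ^ 2)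
          + Ee J I xh 0 * (V (I + 0)) ^ 2 :=
      Finset.sum_range_succ' (fun m => Ee J I xh m * (V (I + m)) ^ 2) M
    rw [hRJ, hRI, hsucc]
    have hvi : V (I + 0) = V I := rfl
    rw [hvi]
    ring
  -- energy quantities
  set A := ∑ k ∈ Finset.range K, ∑ j ∈ Finset.range I,
      hw xh (j + 1) * (P (k + 1) (j + 1) * (P (k + 1) (j + 1) - P k (j + 1))) with hAdef
  set SW := ∑ k ∈ Finset.range K, ∑ m ∈ Finset.range (I + 1),
      Dd I xh m * (W (k + 1) m) ^ 2 with hSWdef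
  set B := ∑ m ∈ Finset.range M, hw xh (I + m + 1) * R (I + m + 1) ^ 2 with hBdef
  set SV := ∑ m ∈ Finset.range (M + 1), Ee J I xh m * (V (I + m)) ^ 2 with hSVdef
  have hA : A = δt2 * dQ2 x * V I - δt1 * SW := by
    have hk : ∀ k ∈ Finset.range K,
        ∑ j ∈ Finset.range I, hw xh (j + 1) * (P (k + 1) (j + 1) * (P (k + 1) (j + 1) - P k (j + 1)))
        = δt1 * (W (k + 1) I * Q (k + 1))
          - δt1 * ∑ m ∈ Finset.range (I + 1), Dd I xh m * (W (k + 1) m) ^ 2 := by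
      intro k hkm
      have hkK := Finset.mem_range.mp hkm
      have hterm : ∀ j ∈ Finset.range I,
          hw xh (j + 1) * (P (k + 1) (j + 1) * (P (k + 1) (j + 1) - P k (j + 1)))
          = δt1 * ((W (k + 1) (j + 1) - W (k + 1) j) * P (k + 1) (j + 1)) := by
        intro j hj
        have hjI := Finset.mem_range.mp hj
        have h := F1 k hkK j hjI
        have hne : δt1 ≠ 0 := ne_of_gt hδt1
        have hΔ : hw xh (j + 1) * (P (k + 1) (j + 1) - P k (j + 1))
            = δt1 * (W (k + 1) (j + 1) - W (k + 1) j) := by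
          field_simp at h
          linarith
        calc hw xh (j + 1) * (P (k + 1) (j + 1) * (P (k + 1) (j + 1) - P k (j + 1)))
            = (hw xh (j + 1) * (P (k + 1) (j + 1) - P k (j + 1))) * P (k + 1) (j + 1) := by ring
          _ = (δt1 * (W (k + 1) (j + 1) - W (k + 1) j)) * P (k + 1) (j + 1) := by rw [hΔ]
          _ = δt1 * ((W (k + 1) (j + 1) - W (k + 1) j) * P (k + 1) (j + 1)) := by ring
      rw [Finset.sum_congr rfl hterm, ← Finset.mul_sum, stepA (k + 1)]
      ring
    have hsb : A = (∑ k ∈ Finset.range K, δt1 * (W (k + 1) I * Q (k + 1)))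
        - ∑ k ∈ Finset.range K, δt1 * ∑ m ∈ Finset.range (I + 1), Dd I xh m * (W (k + 1) m) ^ 2 := by
      rw [hAdef, Finset.sum_congr rfl hk, Finset.sum_sub_distrib]
    have hb : ∑ k ∈ Finset.range K, δt1 * ∑ m ∈ Finset.range (I + 1), Dd I xh m * (W (k + 1) m) ^ 2
        = δt1 * SW := by
      rw [hSWdef, Finset.mul_sum]
    have ha : ∑ k ∈ Finset.range K, δt1 * (W (k + 1) I * Q (k + 1)) = δt2 * dQ2 x * V I := by
      have h3 : ∀ k ∈ Finset.range K, δt1 * (W (k + 1) I * Q (k + 1)) = V I * (δt1 * Q (k + 1)) := by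
        intro k hkm
        rw [F3 k (Finset.mem_range.mp hkm)]
        ring
      rw [Finset.sum_congr rfl h3, ← Finset.mul_sum]
      have h4 : ∑ k ∈ Finset.range K, δt1 * Q (k + 1) = ∑ k ∈ Finset.Icc 1 K, δt1 * Q k := by
        rw [← Finset.Ico_add_one_right_eq_Icc, Finset.sum_Ico_eq_sum_range]
        refine Finset.sum_congr ?_ fun i _ => by rw [Nat.add_comm]
        norm_num
      rw [h4, ← F4]
      ring
    rw [hsb, ha, hb]
  have hB' : B = δt2 * (-(V I * dQ2 x) - SV) := by
    have hterm : ∀ m ∈ Finset.range M,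
        hw xh (I + m + 1) * R (I + m + 1) ^ 2
        = δt2 * ((V (I + m + 1) - V (I + m)) * R (I + m + 1)) := by
      intro m hm
      have hmM := Finset.mem_range.mp hm
      have h := F2 m hmM
      have hne : δt2 ≠ 0 := ne_of_gt hδt2pos
      have hΔ : hw xh (I + m + 1) * R (I + m + 1) = δt2 * (V (I + m + 1) - V (I + m)) := by
        field_simp at h
        linarith
      calc hw xh (I + m + 1) * R (I + m + 1) ^ 2
          = (hw xh (I + m + 1) * R (I + m + 1)) * R (I + m + 1) := by ring
        _ = (δt2 * (V (I + m + 1) - V (I + m))) * R (I + m + 1) := by rw [hΔ]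
        _ = δt2 * ((V (I + m + 1) - V (I + m)) * R (I + m + 1)) := by ring
    rw [hBdef, Finset.sum_congr rfl hterm, ← Finset.mul_sum, stepB]
  have key : A + δt1 * SW + (B + δt2 * SV) = 0 := by
    rw [hA, hB']
    ring
  -- nonnegativity
  have hA0 : 0 ≤ A := by
    rw [hAdef, Finset.sum_comm]
    apply Finset.sum_nonneg
    intro j hj
    have hjI := Finset.mem_range.mp hj
    have hhw := hw_pos J xh hxmono (j := j + 1) (by omega) (by omega)
    rw [← Finset.mul_sum]
    exact mul_nonneg hhw.le
      (CompositeAux.time_energy K (fun k => P k (j + 1)) (dP1_out x (by omega)))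
  have hSW0 : 0 ≤ SW :=
    Finset.sum_nonneg fun k _ => Finset.sum_nonneg fun m hm =>
      mul_nonneg (Dd_pos J I xh hxmono hI1 hIJ
        (by have := Finset.mem_range.mp hm; omega)).le (sq_nonneg _)
  have hB0 : 0 ≤ B :=
    Finset.sum_nonneg fun m hm =>
      mul_nonneg (hw_pos J xh hxmono (by omega)
        (by have := Finset.mem_range.mp hm; omega)).le (sq_nonneg _)
  have hSV0 : 0 ≤ SV :=
    Finset.sum_nonneg fun m hm =>
      mul_nonneg (Ee_pos J I xh hxmono hIJ
        (by have := Finset.mem_range.mp hm; omega)).le (sq_nonneg _)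
  have hSW1 : δt1 * SW ≤ 0 := by
    have := mul_nonneg hδt2pos.le hSV0
    linarith
  have hSWz : SW = 0 := by
    have h5 : δt1 * SW ≤ δt1 * 0 := by rw [mul_zero]; exact hSW1
    exact le_antisymm (le_of_mul_le_mul_left h5 hδt1) hSW0
  have hSV1 : δt2 * SV ≤ 0 := by
    have := mul_nonneg hδt1.le hSW0
    linarith
  have hSVz : SV = 0 := by
    have h5 : δt2 * SV ≤ δt2 * 0 := by rw [mul_zero]; exact hSV1
    exact le_antisymm (le_of_mul_le_mul_left h5 hδt2pos) hSV0
  have hBz : B = 0 := by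
    rw [hSWz, hSVz, mul_zero, mul_zero, add_zero, add_zero] at key
    linarith
  -- pointwise zero fluxes and values
  have hWz : ∀ k, k < K → ∀ m, m ≤ I → W (k + 1) m = 0 := by
    intro k hk m hm
    have houter := (Finset.sum_eq_zero_iff_of_nonneg (fun k' _ =>
      Finset.sum_nonneg (fun m' hm' => mul_nonneg (Dd_pos J I xh hxmono hI1 hIJ
        (by have := Finset.mem_range.mp hm'; omega)).le (sq_nonneg _)))).mp hSWz
    have hinner := (Finset.sum_eq_zero_iff_of_nonneg (fun m' hm' =>
      mul_nonneg (Dd_pos J I xh hxmono hI1 hIJ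
        (by have := Finset.mem_range.mp hm'; omega)).le (sq_nonneg _))).mp
      (houter k (Finset.mem_range.mpr hk))
    have hterm := hinner m (Finset.mem_range.mpr (by omega))
    have hd := Dd_pos J I xh hxmono hI1 hIJ hm
    have hsq : (W (k + 1) m) ^ 2 = 0 := by
      rcases mul_eq_zero.mp hterm with h | h
      · exact absurd h (ne_of_gt hd)
      · exact h
    exact pow_eq_zero_iff two_ne_zero |>.mp hsq
  have hVz : ∀ m, m ≤ M → V (I + m) = 0 := by
    intro m hm
    have hterm := (Finset.sum_eq_zero_iff_of_nonneg (fun m' hm' =>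
      mul_nonneg (Ee_pos J I xh hxmono hIJ
        (by have := Finset.mem_range.mp hm'; omega)).le (sq_nonneg _))).mp hSVz
      m (Finset.mem_range.mpr (by omega))
    have he := Ee_pos J I xh hxmono hIJ hm
    have hsq : (V (I + m)) ^ 2 = 0 := by
      rcases mul_eq_zero.mp hterm with h | h
      · exact absurd h (ne_of_gt he)
      · exact h
    exact pow_eq_zero_iff two_ne_zero |>.mp hsq
  have hRz : ∀ m, m < M → R (I + m + 1) = 0 := by
    intro m hm
    have hterm := (Finset.sum_eq_zero_iff_of_nonneg (fun m' hm' =>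
      mul_nonneg (hw_pos J xh hxmono (by omega)
        (by have := Finset.mem_range.mp hm'; omega)).le (sq_nonneg _))).mp hBz
      m (Finset.mem_range.mpr hm)
    have hh := hw_pos J xh hxmono (j := I + m + 1) (by omega) (by omega)
    have hsq : R (I + m + 1) ^ 2 = 0 := by
      rcases mul_eq_zero.mp hterm with h | h
      · exact absurd h (ne_of_gt hh)
      · exact h
    exact pow_eq_zero_iff two_ne_zero |>.mp hsq
  have hQ2z : dQ2 x = 0 := by
    have hV0 : V I = 0 := hVz 0 (by omega)
    have hr1 : R (I + 1) = 0 := hRz 0 (by omega)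
    have r4 := rel4
    rw [hV0, mul_zero] at r4
    linarith
  have hPz : ∀ k, k < K → ∀ j, j ≤ I → P (k + 1) j = 0 := by
    intro k hk j
    induction j with
    | zero => intro _; exact dP1_out x (by omega)
    | succ j ih =>
      intro hj
      have h1 := rel1 (k + 1) j (by omega)
      have h2 := hWz k hk j (by omega)
      rw [h2, mul_zero] at h1
      have h3 := ih (by omega)
      linarith
  have hQz : ∀ k, k < K → Q (k + 1) = 0 := by
    intro k hk
    have h1 := rel2 (k + 1)
    have h2 := hWz k hk I le_rfl
    have h3 := hPz k hk I le_rfl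
    rw [h2, mul_zero, h3] at h1
    linarith
  funext i
  rcases i with ⟨k, j⟩ | m | k | u
  · simp only [Pi.zero_apply]
    rw [← dP1_coord x k j]
    exact hPz k k.isLt ((j : ℕ) + 1) (by have := j.isLt; omega)
  · simp only [Pi.zero_apply]
    rw [← dP2_coord x m]
    exact hRz m m.isLt
  · simp only [Pi.zero_apply]
    rw [← dQ1_coord x k]
    exact hQz k k.isLt
  · simp only [Pi.zero_apply]
    exact hQ2z

variable (J I K xh δt1 δt2) in
/-- One coarse time step of the composite scheme as a self-contained system. -/
def Sys (a b : ℕ → ℝ) (g1 : ℕ → ℕ → ℝ) (g2 : ℕ → ℝ)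
    (P1 : ℕ → ℕ → ℝ) (P2 : ℕ → ℝ) (Q1 : ℕ → ℝ) (Q2 : ℝ) : Prop :=
  (∀ k ∈ Finset.Icc 1 K, ∀ j ∈ Finset.Icc 1 I,
    (hw xh j / δt1) * (P1 k j - (if k = 1 then a j else P1 (k - 1) j))
      - (uF I xh (fun _ => P1) (fun _ => Q1) 0 k j
          - uF I xh (fun _ => P1) (fun _ => Q1) 0 k (j - 1))
      = hw xh j * g1 k j)
  ∧ (∀ j ∈ Finset.Icc (I + 1) J,
    (hw xh j / δt2) * (P2 j - b j)
      - (uC I J xh (fun _ => P2) (fun _ => Q2) 0 j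
          - uC I J xh (fun _ => P2) (fun _ => Q2) 0 (j - 1))
      = hw xh j * g2 j)
  ∧ (∀ k ∈ Finset.Icc 1 K,
      uF I xh (fun _ => P1) (fun _ => Q1) 0 k I
        = uC I J xh (fun _ => P2) (fun _ => Q2) 0 I)
  ∧ δt2 * Q2 = ∑ k ∈ Finset.Icc 1 K, δt1 * Q1 k

lemma uF_congr (hI1 : 1 ≤ I) {p1 p1' : ℕ → ℕ → ℕ → ℝ} {q1 q1' : ℕ → ℕ → ℝ} {n n' k j : ℕ}
    (hj : j ≤ I)
    (hp : ∀ ι, 1 ≤ ι → ι ≤ I → p1 n k ι = p1' n' k ι) (hq : q1 n k = q1' n' k) :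
    uF I xh p1 q1 n k j = uF I xh p1' q1' n' k j := by
  unfold uF
  split_ifs with h0 hlt
  · rw [hp 1 le_rfl (by omega)]
  · rw [hp j (by omega) (by omega), hp (j + 1) (by omega) (by omega)]
  · rw [hp I (by omega) le_rfl, hq]

lemma uC_congr {p2 p2' : ℕ → ℕ → ℝ} {q2 q2' : ℕ → ℝ} {n n' j : ℕ}
    (hIj : I ≤ j) (hj : j ≤ J) (hIJ : I < J)
    (hp : ∀ ι, I + 1 ≤ ι → ι ≤ J → p2 n ι = p2' n' ι) (hq : q2 n = q2' n') :
    uC I J xh p2 q2 n j = uC I J xh p2' q2' n' j := by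
  unfold uC
  split_ifs with h0 hlt
  · rw [hp J (by omega) le_rfl]
  · rw [hp j (by omega) (by omega), hp (j + 1) (by omega) (by omega)]
  · rw [hp (I + 1) le_rfl (by omega), hq]

variable (J I K xh δt1 δt2) in
/-- Right-hand side vector of the one-step linear system. -/
noncomputable def rvec (a b : ℕ → ℝ) (g1 : ℕ → ℕ → ℝ) (g2 : ℕ → ℝ) : Ix J I K → ℝ :=
  Sum.elim
    (fun p : Fin K × Fin I =>
      hw xh ((p.2 : ℕ) + 1) * g1 ((p.1 : ℕ) + 1) ((p.2 : ℕ) + 1)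
        + (if (p.1 : ℕ) = 0 then (hw xh ((p.2 : ℕ) + 1) / δt1) * a ((p.2 : ℕ) + 1) else 0))
    (Sum.elim
      (fun m : Fin (J - I) =>
        hw xh (I + 1 + (m : ℕ)) * g2 (I + 1 + (m : ℕ))
          + (hw xh (I + 1 + (m : ℕ)) / δt2) * b (I + 1 + (m : ℕ)))
      (Sum.elim (fun _ => 0) (fun _ => 0)))

variable (J I K) in
/-- Encode a candidate solution as a coordinate vector. -/
def enc (P1 : ℕ → ℕ → ℝ) (P2 : ℕ → ℝ) (Q1 : ℕ → ℝ) (Q2 : ℝ) : Ix J I K → ℝ :=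
  Sum.elim (fun p : Fin K × Fin I => P1 ((p.1 : ℕ) + 1) ((p.2 : ℕ) + 1))
    (Sum.elim (fun m : Fin (J - I) => P2 (I + 1 + (m : ℕ)))
      (Sum.elim (fun k : Fin K => Q1 ((k : ℕ) + 1)) (fun _ => Q2)))

lemma dP1_enc (P1 : ℕ → ℕ → ℝ) (P2 : ℕ → ℝ) (Q1 : ℕ → ℝ) (Q2 : ℝ) {k j : ℕ}
    (hk : 1 ≤ k) (hkK : k ≤ K) (hj : 1 ≤ j) (hjI : j ≤ I) :
    dP1 (enc J I K P1 P2 Q1 Q2) k j = P1 k j := by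
  rw [dP1, dif_pos ⟨hk, hkK, hj, hjI⟩]
  show P1 (k - 1 + 1) (j - 1 + 1) = P1 k j
  rw [Nat.sub_add_cancel hk, Nat.sub_add_cancel hj]

lemma dP2_enc (P1 : ℕ → ℕ → ℝ) (P2 : ℕ → ℝ) (Q1 : ℕ → ℝ) (Q2 : ℝ) {j : ℕ}
    (hj : I + 1 ≤ j) (hjJ : j ≤ J) :
    dP2 (enc J I K P1 P2 Q1 Q2) j = P2 j := by
  rw [dP2, dif_pos ⟨hj, hjJ⟩]
  show P2 (I + 1 + (j - (I + 1))) = P2 j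
  congr 1
  omega

lemma dQ1_enc (P1 : ℕ → ℕ → ℝ) (P2 : ℕ → ℝ) (Q1 : ℕ → ℝ) (Q2 : ℝ) {k : ℕ}
    (hk : 1 ≤ k) (hkK : k ≤ K) :
    dQ1 (enc J I K P1 P2 Q1 Q2) k = Q1 k := by
  rw [dQ1, dif_pos ⟨hk, hkK⟩]
  show Q1 (k - 1 + 1) = Q1 k
  rw [Nat.sub_add_cancel hk]

lemma dQ2_enc (P1 : ℕ → ℕ → ℝ) (P2 : ℕ → ℝ) (Q1 : ℕ → ℝ) (Q2 : ℝ) :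
    dQ2 (enc J I K P1 P2 Q1 Q2) = Q2 := rfl

lemma Lmap_apply (x : Ix J I K → ℝ) (i : Ix J I K) :
    Lmap J I K xh δt1 δt2 x i = Lfun J I K xh δt1 δt2 x i := rfl

lemma Lmap_enc (hI1 : 1 ≤ I) (hIJ : I < J)
    (a b : ℕ → ℝ) (g1 : ℕ → ℕ → ℝ) (g2 : ℕ → ℝ)
    (P1 : ℕ → ℕ → ℝ) (P2 : ℕ → ℝ) (Q1 : ℕ → ℝ) (Q2 : ℝ)
    (h : Sys J I K xh δt1 δt2 a b g1 g2 P1 P2 Q1 Q2) :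
    Lmap J I K xh δt1 δt2 (enc J I K P1 P2 Q1 Q2)
      = rvec J I K xh δt1 δt2 a b g1 g2 := by
  obtain ⟨h1, h2, h3, h4⟩ := h
  funext i
  set E := enc J I K P1 P2 Q1 Q2 with hE
  have hd1 : ∀ k' j', 1 ≤ k' → k' ≤ K → 1 ≤ j' → j' ≤ I → dP1 E k' j' = P1 k' j' :=
    fun k' j' ha hb hc hd => dP1_enc P1 P2 Q1 Q2 ha hb hc hd
  have hd2 : ∀ j', I + 1 ≤ j' → j' ≤ J → dP2 E j' = P2 j' :=
    fun j' ha hb => dP2_enc P1 P2 Q1 Q2 ha hb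
  have hq1 : ∀ k', 1 ≤ k' → k' ≤ K → dQ1 E k' = Q1 k' :=
    fun k' ha hb => dQ1_enc P1 P2 Q1 Q2 ha hb
  have hq2 : dQ2 E = Q2 := rfl
  have hpf : ∀ k', 1 ≤ k' → k' ≤ K → ∀ j', j' ≤ I →
      uF I xh (fun _ => dP1 E) (fun _ => dQ1 E) 0 k' j'
      = uF I xh (fun _ => P1) (fun _ => Q1) 0 k' j' := by
    intro k' ha hb j' hj'
    exact uF_congr hI1 hj' (fun ι hι1 hι2 => hd1 k' ι ha hb hι1 hι2) (hq1 k' ha hb)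
  have hpc : ∀ j', I ≤ j' → j' ≤ J →
      uC I J xh (fun _ => dP2 E) (fun _ => dQ2 E) 0 j'
      = uC I J xh (fun _ => P2) (fun _ => Q2) 0 j' := by
    intro j' hj1 hj2
    exact uC_congr hj1 hj2 hIJ (fun ι hι1 hι2 => hd2 ι hι1 hι2) hq2
  rcases i with ⟨k, j⟩ | m | k | u
  · have hkK := k.isLt
    have hjI := j.isLt
    show (hw xh ((j : ℕ) + 1) / δt1)
          * (dP1 E ((k : ℕ) + 1) ((j : ℕ) + 1) - dP1 E (k : ℕ) ((j : ℕ) + 1))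
        - (uF I xh (fun _ => dP1 E) (fun _ => dQ1 E) 0 ((k : ℕ) + 1) ((j : ℕ) + 1)
            - uF I xh (fun _ => dP1 E) (fun _ => dQ1 E) 0 ((k : ℕ) + 1) (j : ℕ))
        = hw xh ((j : ℕ) + 1) * g1 ((k : ℕ) + 1) ((j : ℕ) + 1)
          + (if (k : ℕ) = 0 then (hw xh ((j : ℕ) + 1) / δt1) * a ((j : ℕ) + 1) else 0)
    have heq := h1 ((k : ℕ) + 1) (Finset.mem_Icc.mpr ⟨by omega, by omega⟩)
      ((j : ℕ) + 1) (Finset.mem_Icc.mpr ⟨by omega, by omega⟩)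
    simp only [Nat.add_sub_cancel] at heq
    rw [hpf ((k : ℕ) + 1) (by omega) (by omega) ((j : ℕ) + 1) (by omega),
        hpf ((k : ℕ) + 1) (by omega) (by omega) (j : ℕ) (by omega),
        hd1 ((k : ℕ) + 1) ((j : ℕ) + 1) (by omega) (by omega) (by omega) (by omega)]
    by_cases hk0 : (k : ℕ) = 0
    · rw [if_pos hk0]
      have hz : dP1 E (k : ℕ) ((j : ℕ) + 1) = 0 := dP1_out E (by omega)
      rw [hz]
      rw [if_pos (show (k : ℕ) + 1 = 1 by omega)] at heq
      linear_combination heq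
    · rw [if_neg hk0]
      rw [if_neg (show ¬(k : ℕ) + 1 = 1 by omega)] at heq
      rw [hd1 (k : ℕ) ((j : ℕ) + 1) (by omega) (by omega) (by omega) (by omega)]
      linear_combination heq
  · have hmM := m.isLt
    show (hw xh (I + 1 + (m : ℕ)) / δt2) * dP2 E (I + 1 + (m : ℕ))
        - (uC I J xh (fun _ => dP2 E) (fun _ => dQ2 E) 0 (I + 1 + (m : ℕ))
            - uC I J xh (fun _ => dP2 E) (fun _ => dQ2 E) 0 (I + (m : ℕ)))
        = hw xh (I + 1 + (m : ℕ)) * g2 (I + 1 + (m : ℕ))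
          + (hw xh (I + 1 + (m : ℕ)) / δt2) * b (I + 1 + (m : ℕ))
    have heq := h2 (I + 1 + (m : ℕ)) (Finset.mem_Icc.mpr ⟨by omega, by omega⟩)
    rw [show I + 1 + (m : ℕ) - 1 = I + (m : ℕ) by omega] at heq
    rw [hpc (I + 1 + (m : ℕ)) (by omega) (by omega), hpc (I + (m : ℕ)) (by omega) (by omega),
        hd2 (I + 1 + (m : ℕ)) (by omega) (by omega)]
    linear_combination heq
  · have hkK := k.isLt
    show uF I xh (fun _ => dP1 E) (fun _ => dQ1 E) 0 ((k : ℕ) + 1) I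
        - uC I J xh (fun _ => dP2 E) (fun _ => dQ2 E) 0 I = 0
    have heq := h3 ((k : ℕ) + 1) (Finset.mem_Icc.mpr ⟨by omega, by omega⟩)
    rw [hpf ((k : ℕ) + 1) (by omega) (by omega) I le_rfl, hpc I le_rfl (by omega), heq,
        sub_self]
  · show δt2 * dQ2 E - ∑ k ∈ Finset.Icc 1 K, δt1 * dQ1 E k = 0
    have hsum : ∑ k ∈ Finset.Icc 1 K, δt1 * dQ1 E k = ∑ k ∈ Finset.Icc 1 K, δt1 * Q1 k :=
      Finset.sum_congr rfl fun k hk => by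
        have := Finset.mem_Icc.mp hk
        rw [hq1 k this.1 this.2]
    rw [hq2, hsum, h4, sub_self]

lemma Lmap_inj (hxmono : ∀ j < J, xh j < xh (j + 1)) (hI1 : 1 ≤ I) (hIJ : I < J)
    (hK : 1 ≤ K) (hδt1 : 0 < δt1) (hδt2 : δt2 = (K : ℝ) * δt1) :
    Function.Injective (Lmap J I K xh δt1 δt2) := by
  intro u v huv
  have h0 : Lmap J I K xh δt1 δt2 (u - v) = 0 := by rw [map_sub, huv, sub_self]
  exact sub_eq_zero.mp (ker_zero hxmono hI1 hIJ hK hδt1 hδt2 (u - v) h0)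

lemma sys_exists (hxmono : ∀ j < J, xh j < xh (j + 1)) (hI1 : 1 ≤ I) (hIJ : I < J)
    (hK : 1 ≤ K) (hδt1 : 0 < δt1) (hδt2 : δt2 = (K : ℝ) * δt1)
    (a b : ℕ → ℝ) (g1 : ℕ → ℕ → ℝ) (g2 : ℕ → ℝ) :
    ∃ s : (ℕ → ℕ → ℝ) × (ℕ → ℝ) × (ℕ → ℝ) × ℝ,
      Sys J I K xh δt1 δt2 a b g1 g2 s.1 s.2.1 s.2.2.1 s.2.2.2 := by
  have hinj := Lmap_inj hxmono hI1 hIJ hK hδt1 hδt2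
  have hsurj := LinearMap.injective_iff_surjective.mp hinj
  obtain ⟨x, hx⟩ := hsurj (rvec J I K xh δt1 δt2 a b g1 g2)
  refine ⟨⟨dP1 x, dP2 x, dQ1 x, dQ2 x⟩, ?_, ?_, ?_, ?_⟩
  · intro k hk j hj
    obtain ⟨hk1, hkK⟩ := Finset.mem_Icc.mp hk
    obtain ⟨hj1, hjI⟩ := Finset.mem_Icc.mp hj
    have hcomp : (hw xh ((j - 1) + 1) / δt1)
          * (dP1 x ((k - 1) + 1) ((j - 1) + 1) - dP1 x (k - 1) ((j - 1) + 1))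
        - (uF I xh (fun _ => dP1 x) (fun _ => dQ1 x) 0 ((k - 1) + 1) ((j - 1) + 1)
            - uF I xh (fun _ => dP1 x) (fun _ => dQ1 x) 0 ((k - 1) + 1) (j - 1))
        = hw xh ((j - 1) + 1) * g1 ((k - 1) + 1) ((j - 1) + 1)
          + (if (k - 1) = 0 then (hw xh ((j - 1) + 1) / δt1) * a ((j - 1) + 1) else 0) :=
      congrFun hx (Sum.inl (⟨k - 1, by omega⟩, ⟨j - 1, by omega⟩))
    rw [show k - 1 + 1 = k by omega, show j - 1 + 1 = j by omega] at hcomp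
    by_cases hk1' : k = 1
    · have h0 : dP1 x (k - 1) j = 0 := dP1_out x (by omega)
      rw [if_pos (show k - 1 = 0 by omega), h0] at hcomp
      rw [if_pos hk1']
      linear_combination hcomp
    · rw [if_neg (show ¬k - 1 = 0 by omega)] at hcomp
      rw [if_neg hk1']
      linear_combination hcomp
  · intro j hj
    obtain ⟨hj1, hjJ⟩ := Finset.mem_Icc.mp hj
    have hcomp : (hw xh (I + 1 + (j - (I + 1))) / δt2) * dP2 x (I + 1 + (j - (I + 1)))
        - (uC I J xh (fun _ => dP2 x) (fun _ => dQ2 x) 0 (I + 1 + (j - (I + 1)))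
            - uC I J xh (fun _ => dP2 x) (fun _ => dQ2 x) 0 (I + (j - (I + 1))))
        = hw xh (I + 1 + (j - (I + 1))) * g2 (I + 1 + (j - (I + 1)))
          + (hw xh (I + 1 + (j - (I + 1))) / δt2) * b (I + 1 + (j - (I + 1))) :=
      congrFun hx (Sum.inr (Sum.inl ⟨j - (I + 1), by omega⟩))
    rw [show I + 1 + (j - (I + 1)) = j by omega, show I + (j - (I + 1)) = j - 1 by omega]
      at hcomp
    linear_combination hcomp
  · intro k hk
    obtain ⟨hk1, hkK⟩ := Finset.mem_Icc.mp hk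
    have hcomp : uF I xh (fun _ => dP1 x) (fun _ => dQ1 x) 0 ((k - 1) + 1) I
        - uC I J xh (fun _ => dP2 x) (fun _ => dQ2 x) 0 I = 0 :=
      congrFun hx (Sum.inr (Sum.inr (Sum.inl ⟨k - 1, by omega⟩)))
    rw [show k - 1 + 1 = k by omega] at hcomp
    linarith
  · have hcomp : δt2 * dQ2 x - ∑ k ∈ Finset.Icc 1 K, δt1 * dQ1 x k = 0 :=
      congrFun hx (Sum.inr (Sum.inr (Sum.inr ())))
    linarith

lemma sys_unique (hxmono : ∀ j < J, xh j < xh (j + 1)) (hI1 : 1 ≤ I) (hIJ : I < J)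
    (hK : 1 ≤ K) (hδt1 : 0 < δt1) (hδt2 : δt2 = (K : ℝ) * δt1)
    (a a' b b' : ℕ → ℝ) (g1 : ℕ → ℕ → ℝ) (g2 : ℕ → ℝ)
    (ha : ∀ j, 1 ≤ j → j ≤ I → a j = a' j)
    (hb : ∀ j, I + 1 ≤ j → j ≤ J → b j = b' j)
    (P1 : ℕ → ℕ → ℝ) (P2 : ℕ → ℝ) (Q1 : ℕ → ℝ) (Q2 : ℝ)
    (P1' : ℕ → ℕ → ℝ) (P2' : ℕ → ℝ) (Q1' : ℕ → ℝ) (Q2' : ℝ)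
    (h : Sys J I K xh δt1 δt2 a b g1 g2 P1 P2 Q1 Q2)
    (h' : Sys J I K xh δt1 δt2 a' b' g1 g2 P1' P2' Q1' Q2') :
    (∀ k, 1 ≤ k → k ≤ K → ∀ j, 1 ≤ j → j ≤ I → P1 k j = P1' k j)
    ∧ (∀ j, I + 1 ≤ j → j ≤ J → P2 j = P2' j)
    ∧ (∀ k, 1 ≤ k → k ≤ K → Q1 k = Q1' k) ∧ Q2 = Q2' := by
  have hinj := Lmap_inj hxmono hI1 hIJ hK hδt1 hδt2
  have hr : rvec J I K xh δt1 δt2 a b g1 g2 = rvec J I K xh δt1 δt2 a' b' g1 g2 := by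
    funext i
    rcases i with ⟨k, j⟩ | m | k | u
    · simp only [rvec, Sum.elim_inl]
      rw [ha ((j : ℕ) + 1) (by omega) (by have := j.isLt; omega)]
    · simp only [rvec, Sum.elim_inr, Sum.elim_inl]
      rw [hb (I + 1 + (m : ℕ)) (by omega) (by have := m.isLt; omega)]
    · rfl
    · rfl
  have hxy : enc J I K P1 P2 Q1 Q2 = enc J I K P1' P2' Q1' Q2' := by
    apply hinj
    rw [Lmap_enc hI1 hIJ a b g1 g2 P1 P2 Q1 Q2 h,
        Lmap_enc hI1 hIJ a' b' g1 g2 P1' P2' Q1' Q2' h', hr]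
  refine ⟨?_, ?_, ?_, ?_⟩
  · intro k hk1 hkK j hj1 hjI
    have hco : P1 (k - 1 + 1) (j - 1 + 1) = P1' (k - 1 + 1) (j - 1 + 1) :=
      congrFun hxy (Sum.inl (⟨k - 1, by omega⟩, ⟨j - 1, by omega⟩))
    rwa [show k - 1 + 1 = k by omega, show j - 1 + 1 = j by omega] at hco
  · intro j hj1 hjJ
    have hco : P2 (I + 1 + (j - (I + 1))) = P2' (I + 1 + (j - (I + 1))) :=
      congrFun hxy (Sum.inr (Sum.inl ⟨j - (I + 1), by omega⟩))
    rwa [show I + 1 + (j - (I + 1)) = j by omega] at hco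
  · intro k hk1 hkK
    have hco : Q1 (k - 1 + 1) = Q1' (k - 1 + 1) :=
      congrFun hxy (Sum.inr (Sum.inr (Sum.inl ⟨k - 1, by omega⟩)))
    rwa [show k - 1 + 1 = k by omega] at hco
  · exact congrFun hxy (Sum.inr (Sum.inr (Sum.inr ())))

end Alg

/-- Well-posedness with interface unknowns and fine-flux/coarse-pressure matching:
for every choice of sources and initial values, the resulting finite linear system has
exactly one solution `(p_j^{n,k}` for `j ≤ I`, `p_j^{n}` for `j > I`, `p_{I+1/2}^{n,k}`,
`p_{I+1/2}^{n})`. -/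
theorem wellposed_interface_unknowns_fine_flux
    (J I K N2 : ℕ) (hJ : 3 ≤ J) (hI1 : 1 ≤ I) (hIJ : I < J) (hK : 1 ≤ K) (hN2 : 1 ≤ N2)
    (δt1 : ℝ) (hδt1 : 0 < δt1) (δt2 : ℝ) (hδt2 : δt2 = (K : ℝ) * δt1)
    (xh : ℕ → ℝ) (hx0 : xh 0 = 0) (hxmono : ∀ j < J, xh j < xh (j + 1))
    (p0 : ℕ → ℝ) (f1 : ℕ → ℕ → ℕ → ℝ) (f2 : ℕ → ℕ → ℝ) :
    (∃ p1 p2 q1 q2,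
        SchemeEqs J I K N2 δt1 δt2 xh p0 f1 f2 p1 p2 q1 q2
        ∧ InterfaceFineFlux J I K N2 δt1 δt2 xh p1 p2 q1 q2)
    ∧ ∀ p1 p2 q1 q2 p1' p2' q1' q2',
        SchemeEqs J I K N2 δt1 δt2 xh p0 f1 f2 p1 p2 q1 q2 →
        InterfaceFineFlux J I K N2 δt1 δt2 xh p1 p2 q1 q2 →
        SchemeEqs J I K N2 δt1 δt2 xh p0 f1 f2 p1' p2' q1' q2' →
        InterfaceFineFlux J I K N2 δt1 δt2 xh p1' p2' q1' q2' →
        ∀ n ∈ Icc 1 N2,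
          (∀ k ∈ Icc 1 K, (∀ j ∈ Icc 1 I, p1 n k j = p1' n k j) ∧ q1 n k = q1' n k)
          ∧ (∀ j ∈ Icc (I + 1) J, p2 n j = p2' n j) ∧ q2 n = q2' n := by
  have hex := fun a b g1 g2 => sys_exists (xh := xh) (δt1 := δt1) (δt2 := δt2)
    hxmono hI1 hIJ hK hδt1 hδt2 a b g1 g2
  constructor
  · -- existence
    let sol : ℕ → (ℕ → ℕ → ℝ) × (ℕ → ℝ) × (ℕ → ℝ) × ℝ := fun n =>
      Nat.rec (motive := fun _ => (ℕ → ℕ → ℝ) × (ℕ → ℝ) × (ℕ → ℝ) × ℝ)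
        ⟨fun _ j => p0 j, fun j => p0 j, fun _ => 0, 0⟩
        (fun m prev => Classical.choose (hex (prev.1 K) (prev.2.1) (f1 (m + 1)) (f2 (m + 1)))) n
    have hsol : ∀ m, Sys J I K xh δt1 δt2 ((sol m).1 K) ((sol m).2.1) (f1 (m + 1)) (f2 (m + 1))
        ((sol (m + 1)).1) ((sol (m + 1)).2.1) ((sol (m + 1)).2.2.1) ((sol (m + 1)).2.2.2) :=
      fun m => Classical.choose_spec (hex ((sol m).1 K) ((sol m).2.1) (f1 (m + 1)) (f2 (m + 1)))
    refine ⟨fun n => (sol n).1, fun n => (sol n).2.1, fun n => (sol n).2.2.1,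
      fun n => (sol n).2.2.2, ⟨?_, ?_⟩, ?_⟩
    · intro n hn k hk j hj
      have hn' := Finset.mem_Icc.mp hn
      have hn1 : n - 1 + 1 = n := by omega
      have hs := (hsol (n - 1)).1 k hk j hj
      rw [hn1] at hs
      by_cases hke : k = 1
      · rw [if_pos hke] at hs
        by_cases hne : n = 1
        · simp only [prevF, if_pos hke, if_pos hne]
          subst hne
          exact hs
        · simp only [prevF, if_pos hke, if_neg hne]
          exact hs
      · rw [if_neg hke] at hs
        simp only [prevF, if_neg hke]
        exact hs
    · intro n hn j hj
      have hn' := Finset.mem_Icc.mp hn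
      have hn1 : n - 1 + 1 = n := by omega
      have hs := (hsol (n - 1)).2.1 j hj
      rw [hn1] at hs
      by_cases hne : n = 1
      · simp only [prevC, if_pos hne]
        subst hne
        exact hs
      · simp only [prevC, if_neg hne]
        exact hs
    · intro n hn
      have hn' := Finset.mem_Icc.mp hn
      have hn1 : n - 1 + 1 = n := by omega
      refine ⟨?_, ?_⟩
      · intro k hk
        have hs := (hsol (n - 1)).2.2.1 k hk
        rw [hn1] at hs
        exact hs
      · have hs := (hsol (n - 1)).2.2.2
        rw [hn1] at hs
        exact hs
  · -- uniqueness
    intro p1 p2 q1 q2 p1' p2' q1' q2' hS hF hS' hF'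
    have main : ∀ n, 1 ≤ n → n ≤ N2 →
        (∀ k ∈ Icc 1 K, (∀ j ∈ Icc 1 I, p1 n k j = p1' n k j) ∧ q1 n k = q1' n k)
        ∧ (∀ j ∈ Icc (I + 1) J, p2 n j = p2' n j) ∧ q2 n = q2' n := by
      intro n
      induction n using Nat.strong_induction_on with
      | _ n ih =>
        intro hn1 hnN
        have hmem : n ∈ Icc 1 N2 := Finset.mem_Icc.mpr ⟨hn1, hnN⟩
        have mk : ∀ (P1 : ℕ → ℕ → ℕ → ℝ) (P2 : ℕ → ℕ → ℝ) (Q1 : ℕ → ℕ → ℝ) (Q2 : ℕ → ℝ),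
            SchemeEqs J I K N2 δt1 δt2 xh p0 f1 f2 P1 P2 Q1 Q2 →
            InterfaceFineFlux J I K N2 δt1 δt2 xh P1 P2 Q1 Q2 →
            Sys J I K xh δt1 δt2 (fun j => if n = 1 then p0 j else P1 (n - 1) K j)
              (fun j => if n = 1 then p0 j else P2 (n - 1) j) (f1 n) (f2 n)
              (P1 n) (P2 n) (Q1 n) (Q2 n) := by
          intro P1 P2 Q1 Q2 hSE hIF
          refine ⟨?_, ?_, ?_, ?_⟩
          · intro k hk j hj
            have hthis := hSE.1 n hmem k hk j hj
            by_cases hke : k = 1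
            · simp only [prevF, if_pos hke] at hthis
              rw [if_pos hke]
              exact hthis
            · simp only [prevF, if_neg hke] at hthis
              rw [if_neg hke]
              exact hthis
          · intro j hj
            have hthis := hSE.2 n hmem j hj
            simp only [prevC] at hthis
            exact hthis
          · exact fun k hk => (hIF n hmem).1 k hk
          · exact (hIF n hmem).2
        have h1 := mk p1 p2 q1 q2 hS hF
        have h2 := mk p1' p2' q1' q2' hS' hF'
        have ha : ∀ j, 1 ≤ j → j ≤ I →
            (if n = 1 then p0 j else p1 (n - 1) K j)
              = (if n = 1 then p0 j else p1' (n - 1) K j) := by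
          intro j hj1 hjI
          by_cases hne : n = 1
          · rw [if_pos hne, if_pos hne]
          · rw [if_neg hne, if_neg hne]
            have hkm : K ∈ Icc 1 K := Finset.mem_Icc.mpr ⟨hK, le_rfl⟩
            exact ((ih (n - 1) (by omega) (by omega) (by omega)).1 K hkm).1 j
              (Finset.mem_Icc.mpr ⟨hj1, hjI⟩)
        have hbcong : ∀ j, I + 1 ≤ j → j ≤ J →
            (if n = 1 then p0 j else p2 (n - 1) j)
              = (if n = 1 then p0 j else p2' (n - 1) j) := by
          intro j hj1 hjJ
          by_cases hne : n = 1
          · rw [if_pos hne, if_pos hne]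
          · rw [if_neg hne, if_neg hne]
            exact (ih (n - 1) (by omega) (by omega) (by omega)).2.1 j
              (Finset.mem_Icc.mpr ⟨hj1, hjJ⟩)
        have hu := sys_unique hxmono hI1 hIJ hK hδt1 hδt2 _ _ _ _ (f1 n) (f2 n) ha hbcong
          (p1 n) (p2 n) (q1 n) (q2 n) (p1' n) (p2' n) (q1' n) (q2' n) h1 h2
        refine ⟨?_, ?_, ?_⟩
        · intro k hk
          obtain ⟨hk1, hkK⟩ := Finset.mem_Icc.mp hk
          exact ⟨fun j hj => hu.1 k hk1 hkK j (Finset.mem_Icc.mp hj).1 (Finset.mem_Icc.mp hj).2,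
            hu.2.2.1 k hk1 hkK⟩
        · intro j hj
          obtain ⟨a1, a2⟩ := Finset.mem_Icc.mp hj
          exact hu.2.1 j a1 a2
        · exact hu.2.2.2
    intro n hn
    obtain ⟨a1, a2⟩ := Finset.mem_Icc.mp hn
    exact main n a1 a2
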